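/- Let A be a C*-algebra, let e be an ε_e-quasi-idempotent and f an ε_f-quasi-idempotent, and set δ := ‖e − f‖. If max{ε_e, ε_f} + δ²/4 < 1/4, then for every s ∈ [0,1] the element (1−s)·e + s·f satisfies ‖((1−s)e+sf)² − ((1−s)e+sf)‖ < 1/4; in particular the straight-line path s ↦ (1−s)e + sf is a norm-continuous homotopy of quasi-idempotents from e to f. -/

import Mathlib

lemma quasi_aux {A : Type*} [NonUnitalRing A] [Module ℝ A] [SMulCommClass ℝ A A]
    [IsScalarTower ℝ A A] (e f : A) (s : ℝ) :
    ((1 - s) • e + s • f) * ((1 - s) • e + s • f) - ((1 - s) • e + s • f)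
      = (1 - s) • (e * e - e) + s • (f * f - f) - (s * (1 - s)) • ((e - f) * (e - f)) := by
  have lhs : ((1 - s) • e + s • f) * ((1 - s) • e + s • f)
      = ((1 - s) * (1 - s)) • (e * e) + ((1 - s) * s) • (e * f)
        + (s * (1 - s)) • (f * e) + (s * s) • (f * f) := by
    rw [add_mul, mul_add, mul_add, smul_mul_smul_comm, smul_mul_smul_comm,
      smul_mul_smul_comm, smul_mul_smul_comm]
    abel
  have rhs : (e - f) * (e - f) = e * e - e * f - (f * e - f * f) := by
    rw [sub_mul, mul_sub, mul_sub]
  rw [lhs, rhs]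
  module

/-- If `e` is an `εe`-quasi-idempotent, `f` is an `εf`-quasi-idempotent,
`δ := ‖e − f‖`, and `max εe εf + δ²/4 < 1/4`, then every point of the straight-line path
from `e` to `f` is a quasi-idempotent, i.e. for all `s ∈ [0,1]`,
`‖((1−s)e+sf)² − ((1−s)e+sf)‖ < 1/4`; in particular the straight-line path is a
norm-continuous homotopy of quasi-idempotents from `e` to `f`. -/
theorem homotopy_of_quasiIdempotents {A : Type*} [CStarAlgebra A] (e f : A) (εe εf : ℝ)
    (hεe : 0 < εe) (hεe' : εe ≤ 1 / 4) (hεf : 0 < εf) (hεf' : εf ≤ 1 / 4)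
    (he : ‖e ^ 2 - e‖ < εe) (hf : ‖f ^ 2 - f‖ < εf)
    (h : max εe εf + ‖e - f‖ ^ 2 / 4 < 1 / 4) :
    (∀ s : ℝ, s ∈ Set.Icc (0 : ℝ) 1 →
      ‖((1 - s) • e + s • f) ^ 2 - ((1 - s) • e + s • f)‖ < 1 / 4) ∧
    Continuous (fun s : ℝ => (1 - s) • e + s • f) ∧
    ((fun s : ℝ => (1 - s) • e + s • f) 0 = e) ∧
    ((fun s : ℝ => (1 - s) • e + s • f) 1 = f) := by
  refine ⟨?_, ?_, by simp, by simp⟩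
  · intro s hs
    obtain ⟨hs0, hs1⟩ := hs
    have hid : ((1 - s) • e + s • f) ^ 2 - ((1 - s) • e + s • f)
        = (1 - s) • (e ^ 2 - e) + s • (f ^ 2 - f) - (s * (1 - s)) • ((e - f) ^ 2) := by
      simp only [pow_two]
      exact quasi_aux e f s
    rw [hid]
    have h1 : ‖(1 - s) • (e ^ 2 - e) + s • (f ^ 2 - f) - (s * (1 - s)) • ((e - f) ^ 2)‖
        ≤ (1 - s) * ‖e ^ 2 - e‖ + s * ‖f ^ 2 - f‖ + (s * (1 - s)) * ‖e - f‖ ^ 2 := by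
      calc ‖(1 - s) • (e ^ 2 - e) + s • (f ^ 2 - f) - (s * (1 - s)) • ((e - f) ^ 2)‖
          ≤ ‖(1 - s) • (e ^ 2 - e) + s • (f ^ 2 - f)‖ + ‖(s * (1 - s)) • ((e - f) ^ 2)‖ :=
            norm_sub_le _ _
        _ ≤ ‖(1 - s) • (e ^ 2 - e)‖ + ‖s • (f ^ 2 - f)‖ + ‖(s * (1 - s)) • ((e - f) ^ 2)‖ := by
            gcongr; exact norm_add_le _ _
        _ ≤ (1 - s) * ‖e ^ 2 - e‖ + s * ‖f ^ 2 - f‖ + (s * (1 - s)) * ‖e - f‖ ^ 2 := by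
            rw [norm_smul, norm_smul, norm_smul]
            have hnn : (0:ℝ) ≤ s * (1 - s) := mul_nonneg hs0 (by linarith)
            rw [Real.norm_of_nonneg (by linarith : (0:ℝ) ≤ 1 - s),
              Real.norm_of_nonneg hs0, Real.norm_of_nonneg hnn]
            gcongr
            calc ‖(e - f) ^ 2‖ = ‖(e - f) * (e - f)‖ := by rw [pow_two]
              _ ≤ ‖e - f‖ * ‖e - f‖ := norm_mul_le _ _
              _ = ‖e - f‖ ^ 2 := (pow_two _).symm
    have h2 : (1 - s) * ‖e ^ 2 - e‖ + s * ‖f ^ 2 - f‖ ≤ max εe εf := by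
      have : (1 - s) * ‖e ^ 2 - e‖ + s * ‖f ^ 2 - f‖
          ≤ (1 - s) * max εe εf + s * max εe εf := by
        gcongr
        · exact (he.le.trans (le_max_left _ _))
        · exact (hf.le.trans (le_max_right _ _))
      linarith [this]
    have h4 : (s * (1 - s)) * ‖e - f‖ ^ 2 ≤ ‖e - f‖ ^ 2 / 4 := by
      nlinarith [sq_nonneg ‖e - f‖, sq_nonneg (2 * s - 1)]
    linarith
  · exact (Continuous.smul (by continuity) continuous_const).add
      ((continuous_id).smul continuous_const)
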